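/- Let α > 0, β > 0 and m ≥ 0 be real numbers, and let y : ℝ → ℝ be continuous on [0, ∞), differentiable on (0, ∞), nonnegative, and satisfy y(0) ≤ m and y'(t) ≤ −α·y(t) + m·β for all t > 0. Then α·y(t) ≤ m/(e·t) + m·β for all t > 0, where e = exp(1). -/

import Mathlib

/-- ξ e^{-ξ} ≤ 1/e for ξ ≥ 0. -/
lemma xi_exp_le (ξ : ℝ) (hξ : 0 ≤ ξ) : ξ * Real.exp (-ξ) ≤ 1 / Real.exp 1 := by
  have h : ξ ≤ Real.exp (ξ - 1) := by
    have := Real.add_one_le_exp (ξ - 1)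
    linarith
  have hpos : 0 < Real.exp (-ξ) := Real.exp_pos _
  calc ξ * Real.exp (-ξ) ≤ Real.exp (ξ - 1) * Real.exp (-ξ) := by
        exact mul_le_mul_of_nonneg_right h hpos.le
    _ = Real.exp (-1) := by rw [← Real.exp_add]; ring_nf
    _ = 1 / Real.exp 1 := by rw [Real.exp_neg]; rw [one_div]

/-- Lemma 4.4 (abstracted): if `y ≥ 0`, `y(0) ≤ m` and `y' ≤ -α y + m β` on `(0,∞)`,
then `α y(t) ≤ m/(e t) + m β` for all `t > 0`. -/
theorem mass_control_lemma44
    (α β m : ℝ) (hα : 0 < α) (hβ : 0 < β) (hm : 0 ≤ m)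
    (y : ℝ → ℝ)
    (hcont : ContinuousOn y (Set.Ici (0 : ℝ)))
    (hdiff : ∀ t ∈ Set.Ioi (0 : ℝ), DifferentiableAt ℝ y t)
    (hnonneg : ∀ t ∈ Set.Ici (0 : ℝ), 0 ≤ y t)
    (hy0 : y 0 ≤ m)
    (hode : ∀ t ∈ Set.Ioi (0 : ℝ), deriv y t ≤ -α * y t + m * β) :
    ∀ t > (0 : ℝ), α * y t ≤ m / (Real.exp 1 * t) + m * β := by
  set c : ℝ := m * β / α with hc
  set g : ℝ → ℝ := fun t => (y t - c) * Real.exp (α * t) with hg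
  have hexp : ∀ t : ℝ, HasDerivAt (fun s => Real.exp (α * s)) (α * Real.exp (α * t)) t := by
    intro t
    have := (Real.hasDerivAt_exp (α * t)).comp t ((hasDerivAt_id t).const_mul α)
    simpa [mul_comm, Function.comp_def] using this
  -- g is antitone on [0, ∞)
  have hganti : AntitoneOn g (Set.Ici 0) := by
    apply antitoneOn_of_deriv_nonpos (convex_Ici 0)
    · exact ((hcont.sub continuousOn_const).mul
        (Continuous.continuousOn (by continuity)))
    · intro t ht
      rw [interior_Ici] at ht
      exact ((((hdiff t ht).sub_const c).mul ((hexp t).differentiableAt)).differentiableWithinAt)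
    · intro t ht
      rw [interior_Ici] at ht
      have hdy := hdiff t ht
      have hD : HasDerivAt g ((deriv y t) * Real.exp (α * t)
          + (y t - c) * (α * Real.exp (α * t))) t :=
        ((hdy.hasDerivAt.sub_const c).mul (hexp t))
      rw [hD.deriv]
      have hode' := hode t ht
      have hcc : α * c = m * β := by rw [hc]; field_simp
      have hE : 0 < Real.exp (α * t) := Real.exp_pos _
      have : deriv y t + α * (y t - c) ≤ 0 := by nlinarith
      nlinarith
  intro t ht
  have ht0 : (0:ℝ) ≤ t := ht.le
  have hgt : g t ≤ g 0 := hganti Set.self_mem_Ici (Set.mem_Ici.2 ht0) ht0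
  have hE : 0 < Real.exp (α * t) := Real.exp_pos _
  have hg0 : g 0 = y 0 - c := by simp [hg]
  -- y t ≤ (m - c) exp(-αt) + c ≤ m exp(-αt) + c
  have hyt : y t ≤ m * Real.exp (-(α * t)) + c := by
    have h1 : (y t - c) * Real.exp (α * t) ≤ m - c := by
      rw [hg0] at hgt; calc (y t - c) * Real.exp (α * t) = g t := rfl
        _ ≤ y 0 - c := hgt
        _ ≤ m - c := by linarith
    have hc0 : 0 ≤ c := by positivity
    have h2 : y t - c ≤ (m - c) * Real.exp (-(α * t)) := by
      rw [Real.exp_neg, mul_comm (m - c), ← div_eq_inv_mul, le_div_iff₀ hE]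
      linarith
    have hexple : Real.exp (-(α * t)) ≤ 1 := by
      apply Real.exp_le_one_iff.2; nlinarith
    nlinarith [Real.exp_pos (-(α * t))]
  have hαc : α * c = m * β := by rw [hc]; field_simp
  -- α m exp(-αt) ≤ m/(e t)
  have key : α * (m * Real.exp (-(α * t))) ≤ m / (Real.exp 1 * t) := by
    have hx := xi_exp_le (α * t) (by positivity)
    have he : 0 < Real.exp 1 := Real.exp_pos 1
    have hx' : (α * t) * Real.exp (-(α * t)) * Real.exp 1 ≤ 1 := by
      rw [← le_div_iff₀ he]; exact hx
    rw [le_div_iff₀ (by positivity : (0:ℝ) < Real.exp 1 * t)]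
    nlinarith [mul_le_mul_of_nonneg_left hx' hm]
  nlinarith [mul_le_mul_of_nonneg_left hyt hα.le]
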